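/- Let γ > 0, κ > 0 and α > 0 be real numbers, and for each integer N ≥ 1 define b_S(N) = 1/( 2(γ/N + α) + (γ/N)(N−1) ) and b_W(N) = 1/( 2(κ/N + α) + (2κ/N)(N−1) ). Then b_S(N)/b_W(N) converges, as N → ∞, to 2(κ+α)/(γ+2α); moreover 2(κ+α)/(γ+2α) > 1 if and only if γ < 2κ. -/

import Mathlib

open Filter

/-- Corollary 1, item 3: the ratio of selfish to welfare-maximizing
expected consumption constants tends to `2(κ+α)/(γ+2α)`, which exceeds 1 iff `γ < 2κ`. -/
theorem stmt_8 (γ κ α : ℝ) (hγ : 0 < γ) (hκ : 0 < κ) (hα : 0 < α)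
    (bS bW : ℕ → ℝ)
    (hbS : ∀ N : ℕ, 1 ≤ N →
      bS N = 1 / (2 * (γ / N + α) + (γ / N) * ((N : ℝ) - 1)))
    (hbW : ∀ N : ℕ, 1 ≤ N →
      bW N = 1 / (2 * (κ / N + α) + (2 * κ / N) * ((N : ℝ) - 1))) :
    Tendsto (fun N => bS N / bW N) atTop (nhds (2 * (κ + α) / (γ + 2 * α)))
    ∧ (1 < 2 * (κ + α) / (γ + 2 * α) ↔ γ < 2 * κ) := by
  constructor
  · have hEq : ∀ᶠ N : ℕ in atTop,
        bS N / bW N = 2 * (κ + α) / (γ + 2 * α + γ / N) := by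
      filter_upwards [eventually_ge_atTop 1] with N hN
      have hN0 : (0 : ℝ) < (N : ℝ) := by exact_mod_cast hN
      have hdS : 2 * (γ / N + α) + (γ / N) * ((N : ℝ) - 1)
          = γ + 2 * α + γ / N := by field_simp; ring
      have hdW : 2 * (κ / N + α) + (2 * κ / N) * ((N : ℝ) - 1)
          = 2 * (κ + α) := by field_simp; ring
      rw [hbS N hN, hbW N hN, hdS, hdW]
      rw [div_div_eq_mul_div]; field_simp
    have hden : Tendsto (fun N : ℕ => γ + 2 * α + γ / N) atTop
        (nhds (γ + 2 * α)) := by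
      have h0 : Tendsto (fun N : ℕ => γ * (1 / (N : ℝ))) atTop (nhds (γ * 0)) :=
        tendsto_const_nhds.mul tendsto_one_div_atTop_nhds_zero_nat
      have := (tendsto_const_nhds (x := γ + 2 * α)).add h0
      simpa [div_eq_mul_inv] using this
    have hlim := (tendsto_const_nhds (x := 2 * (κ + α))).div hden
        (by positivity : γ + 2 * α ≠ 0)
    exact hlim.congr' (hEq.mono fun N h => h.symm)
  · rw [lt_div_iff₀ (by positivity), one_mul]
    constructor <;> intro h <;> linarith
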